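/- Let a > 0, Λ > 0, and b ∈ ℝ. Then (1/π) ∫_{−∞}^{+∞} exp( a(Λ + i t)^2 − b(Λ + i t) ) / (Λ + i t) dt = erfc( b / (2√a) ), where the integral is an absolutely convergent integral of a complex-valued function of t ∈ ℝ and the equality is between this complex integral and the real number erfc(b/(2√a)). (This is the contour-integral representation erfc(b/(2√a)) = (1/πi)∫_{Λ−i∞}^{Λ+i∞} (dλ/λ) exp(aλ² − bλ).) -/

import Mathlib

open MeasureTheory Set Complex Filter

/-- The complementary error function `erfc x = (2/√π) ∫_x^∞ e^{-ξ²} dξ`. -/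
noncomputable def erfc (x : ℝ) : ℝ :=
  (2 / Real.sqrt Real.pi) * ∫ ξ in Set.Ioi x, Real.exp (-ξ ^ 2)

lemma norm_cexp' (z : ℂ) : ‖Complex.exp z‖ = Real.exp z.re := Complex.norm_exp z

lemma aux_integral_cexp_neg_Ioi {l : ℂ} (hl : 0 < l.re) :
    ∫ s in Set.Ioi (0:ℝ), Complex.exp (-(s : ℂ) * l) = 1 / l := by
  have hl0 : l ≠ 0 := fun h => by simp [h] at hl
  have hint : IntegrableOn (fun s : ℝ => Complex.exp (-(s : ℂ) * l)) (Ioi 0) := by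
    refine (Integrable.mono' (exp_neg_integrableOn_Ioi 0 hl)
      ?_ (ae_of_all _ fun s => ?_))
    · exact (Complex.continuous_exp.comp (by continuity)).aestronglyMeasurable
    · rw [norm_cexp']
      simp [mul_comm]
  have hderiv : ∀ s ∈ Ici (0:ℝ), HasDerivAt (fun s : ℝ => -l⁻¹ * Complex.exp (-(s : ℂ) * l))
      (Complex.exp (-(s : ℂ) * l)) s := by
    intro s _
    have h1 : HasDerivAt (fun z : ℂ => Complex.exp (-z * l)) (-(Complex.exp (-(s:ℂ) * l) * l)) (s:ℂ) := by
      simpa using (((hasDerivAt_id ((s:ℂ))).neg.mul_const l).cexp)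
    have h2 := (h1.comp_ofReal).const_mul (-l⁻¹)
    refine h2.congr_deriv ?_
    rw [neg_mul_neg, mul_comm (Complex.exp _) l, inv_mul_cancel_left₀ hl0]
  have htend : Tendsto (fun s : ℝ => -l⁻¹ * Complex.exp (-(s : ℂ) * l)) atTop (nhds 0) := by
    apply squeeze_zero_norm (a := fun s : ℝ => ‖l⁻¹‖ * Real.exp (-(l.re * s)))
    · intro s
      rw [norm_mul, norm_neg, norm_cexp']
      simp [mul_comm]
    · rw [show (0:ℝ) = ‖l⁻¹‖ * 0 by ring]
      exact (Real.tendsto_exp_neg_atTop_nhds_zero.comp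
        (Tendsto.const_mul_atTop hl tendsto_id)).const_mul _
  have := integral_Ioi_of_hasDerivAt_of_tendsto' hderiv hint htend
  rw [this]
  simp [one_div]

lemma aux_gauss (a Λ c : ℝ) (ha : 0 < a) :
    ∫ t : ℝ, Complex.exp ((a : ℂ) * ((Λ : ℂ) + (t : ℂ) * Complex.I) ^ 2 -
        (c : ℂ) * ((Λ : ℂ) + (t : ℂ) * Complex.I)) =
      (Real.sqrt (Real.pi / a) : ℂ) * (Real.exp (-c ^ 2 / (4 * a)) : ℂ) := by
  have ha' : (a : ℂ) ≠ 0 := by exact_mod_cast ha.ne'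
  have h1 : ∀ t : ℝ, (a : ℂ) * ((Λ : ℂ) + (t : ℂ) * Complex.I) ^ 2 -
      (c : ℂ) * ((Λ : ℂ) + (t : ℂ) * Complex.I) =
      (-(a:ℂ)) * (t:ℂ) ^ 2 + (((2*a*Λ - c : ℝ) : ℂ) * Complex.I) * (t:ℂ) +
        ((a*Λ^2 - c*Λ : ℝ) : ℂ) := by
    intro t
    push_cast
    linear_combination ((a:ℂ) * (t:ℂ)^2) * Complex.I_sq
  simp_rw [h1]
  rw [integral_cexp_quadratic (by simp [ha] : (-(a:ℂ)).re < 0)]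
  have h2 : ((a*Λ^2 - c*Λ : ℝ) : ℂ) - (((2*a*Λ - c : ℝ) : ℂ) * Complex.I) ^ 2 / (4 * (-(a:ℂ))) =
      ((-c^2/(4*a) : ℝ) : ℂ) := by
    push_cast
    field_simp
    linear_combination ((2*(a:ℂ)*Λ - c)^2) * Complex.I_sq
  rw [h2]
  congr 1
  · rw [neg_neg, show ((Real.pi : ℂ)) / (a : ℂ) = ((Real.pi / a : ℝ) : ℂ) by push_cast; ring,
      show (1/2 : ℂ) = ((1/2 : ℝ) : ℂ) by norm_num,
      ← Complex.ofReal_cpow (by positivity) (1/2 : ℝ)]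
    norm_cast
    exact (Real.sqrt_eq_rpow _).symm
  · exact (Complex.ofReal_exp _).symm

set_option maxHeartbeats 1000000 in
/-- Contour-integral representation of erfc: for `a > 0`, `Λ > 0` and `b ∈ ℝ`,
`(1/π) ∫_{-∞}^{∞} exp(a(Λ+it)² - b(Λ+it))/(Λ+it) dt = erfc(b/(2√a))`;
the integral is absolutely convergent. -/
theorem erfc_contour_integral (a Λ b : ℝ) (ha : 0 < a) (hΛ : 0 < Λ) :
    MeasureTheory.Integrable
        (fun t : ℝ =>
          Complex.exp ((a : ℂ) * ((Λ : ℂ) + (t : ℂ) * Complex.I) ^ 2 -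
              (b : ℂ) * ((Λ : ℂ) + (t : ℂ) * Complex.I)) /
            ((Λ : ℂ) + (t : ℂ) * Complex.I)) ∧
      (1 / (Real.pi : ℂ)) *
          (∫ t : ℝ,
            Complex.exp ((a : ℂ) * ((Λ : ℂ) + (t : ℂ) * Complex.I) ^ 2 -
                (b : ℂ) * ((Λ : ℂ) + (t : ℂ) * Complex.I)) /
              ((Λ : ℂ) + (t : ℂ) * Complex.I)) =
        (erfc (b / (2 * Real.sqrt a)) : ℂ) := by
  have hπ := Real.pi_pos
  set l : ℝ → ℂ := fun t => (Λ : ℂ) + (t : ℂ) * Complex.I with hl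
  have hre : ∀ t, (l t).re = Λ := by intro t; simp [hl]
  have hl0 : ∀ t, l t ≠ 0 := by
    intro t h
    have := congrArg Complex.re h
    rw [hre t] at this
    simp at this
    exact hΛ.ne' this
  -- real part of the exponent
  have hz : ∀ (c t : ℝ), ((a:ℂ) * (l t) ^ 2 - (c:ℂ) * (l t)).re
      = a * Λ^2 - a * t^2 - c * Λ := by
    intro c t
    have heq : (a:ℂ) * (l t) ^ 2 - (c:ℂ) * (l t)
        = ((a*Λ^2 - a*t^2 - c*Λ : ℝ) : ℂ) + ((2*a*Λ*t - c*t : ℝ) : ℂ) * Complex.I := by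
      simp only [hl]; push_cast
      linear_combination ((a:ℂ) * (t:ℂ)^2) * Complex.I_sq
    rw [heq]
    simp [← Complex.ofReal_pow]
  have hΛnorm : ∀ t, Λ ≤ ‖l t‖ := by
    intro t
    calc Λ = (l t).re := (hre t).symm
    _ ≤ |(l t).re| := le_abs_self _
    _ ≤ ‖l t‖ := Complex.abs_re_le_norm _
  -- Part 1: integrability
  have hcont : Continuous fun t : ℝ => Complex.exp ((a:ℂ) * (l t) ^ 2 - (b:ℂ) * (l t)) / l t := by
    apply Continuous.div
    · exact Complex.continuous_exp.comp (by simp only [hl]; continuity)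
    · simp only [hl]; continuity
    · exact hl0
  have hbound : ∀ t : ℝ, ‖Complex.exp ((a:ℂ) * (l t) ^ 2 - (b:ℂ) * (l t)) / l t‖
      ≤ (Real.exp (a*Λ^2 - b*Λ) / Λ) * Real.exp (-a * t^2) := by
    intro t
    rw [norm_div, norm_cexp', hz b t]
    have h1 : Real.exp (a*Λ^2 - a*t^2 - b*Λ) = Real.exp (a*Λ^2 - b*Λ) * Real.exp (-a * t^2) := by
      rw [← Real.exp_add]; ring_nf
    rw [h1]
    calc Real.exp (a*Λ^2 - b*Λ) * Real.exp (-a * t^2) / ‖l t‖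
        ≤ Real.exp (a*Λ^2 - b*Λ) * Real.exp (-a * t^2) / Λ :=
          div_le_div_of_nonneg_left (by positivity) hΛ (hΛnorm t)
      _ = Real.exp (a*Λ^2 - b*Λ) / Λ * Real.exp (-a * t^2) := by ring
  have hInt : Integrable (fun t : ℝ =>
      Complex.exp ((a:ℂ) * (l t) ^ 2 - (b:ℂ) * (l t)) / l t) := by
    exact Integrable.mono' ((integrable_exp_neg_mul_sq ha).const_mul _)
      hcont.aestronglyMeasurable (ae_of_all _ hbound)
  refine ⟨hInt, ?_⟩
  -- Part 2: value
  -- slice identity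
  have hslice : ∀ t : ℝ, ∫ s in Ioi (0:ℝ),
      Complex.exp ((a:ℂ) * (l t) ^ 2 - ((b:ℂ) + (s:ℂ)) * (l t))
      = Complex.exp ((a:ℂ) * (l t) ^ 2 - (b:ℂ) * (l t)) / l t := by
    intro t
    have h1 : ∀ s : ℝ, (a:ℂ) * (l t) ^ 2 - ((b:ℂ) + (s:ℂ)) * (l t)
        = ((a:ℂ) * (l t) ^ 2 - (b:ℂ) * (l t)) + (-(s:ℂ) * (l t)) := by intro s; ring
    simp_rw [h1, Complex.exp_add, integral_const_mul,
      aux_integral_cexp_neg_Ioi (by rw [hre t]; exact hΛ)]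
    rw [mul_one_div]
  -- Fubini
  have hF : Integrable (Function.uncurry fun (t s : ℝ) =>
      Complex.exp ((a:ℂ) * (l t) ^ 2 - ((b:ℂ) + (s:ℂ)) * (l t)))
      (volume.prod (volume.restrict (Ioi 0))) := by
    refine Integrable.mono'
      (Integrable.mul_prod (f := fun t : ℝ => Real.exp (a*Λ^2 - b*Λ) * Real.exp (-a * t^2))
        (g := fun s : ℝ => Real.exp (-Λ * s))
        ((integrable_exp_neg_mul_sq ha).const_mul _) (exp_neg_integrableOn_Ioi 0 hΛ))
      ?_ (ae_of_all _ fun p => ?_)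
    · exact (Complex.continuous_exp.comp (by simp only [hl]; continuity)).aestronglyMeasurable
    · rw [Function.uncurry, norm_cexp']
      have : ((b:ℂ) + (p.2:ℂ)) = (((b + p.2 : ℝ)) : ℂ) := by push_cast; ring
      rw [this, hz (b + p.2) p.1]
      apply le_of_eq
      show Real.exp (a * Λ ^ 2 - a * p.1 ^ 2 - (b + p.2) * Λ)
          = Real.exp (a * Λ ^ 2 - b * Λ) * Real.exp (-a * p.1 ^ 2) * Real.exp (-Λ * p.2)
      rw [← Real.exp_add, ← Real.exp_add]
      congr 1
      ring
  have hswap := integral_integral_swap hF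
  -- inner integral
  have hinner : ∀ s : ℝ, ∫ t : ℝ, Complex.exp ((a:ℂ) * (l t) ^ 2 - ((b:ℂ) + (s:ℂ)) * (l t))
      = ((Real.sqrt (Real.pi / a) * Real.exp (-(b+s) ^ 2 / (4 * a)) : ℝ) : ℂ) := by
    intro s
    have hbs : ((b:ℂ) + (s:ℂ)) = (((b + s : ℝ)) : ℂ) := by push_cast; ring
    rw [show (fun t : ℝ => Complex.exp ((a:ℂ) * (l t) ^ 2 - ((b:ℂ) + (s:ℂ)) * (l t)))
      = fun t : ℝ => Complex.exp ((a:ℂ) * (l t) ^ 2 - (((b + s : ℝ)):ℂ) * (l t)) by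
        rw [hbs]]
    rw [show (fun t : ℝ => Complex.exp ((a:ℂ) * (l t) ^ 2 - (((b + s : ℝ)):ℂ) * (l t)))
      = fun t : ℝ => Complex.exp ((a:ℂ) * ((Λ:ℂ) + (t:ℂ) * Complex.I) ^ 2 -
        (((b + s : ℝ)):ℂ) * ((Λ:ℂ) + (t:ℂ) * Complex.I)) from rfl]
    rw [aux_gauss a Λ (b+s) ha]
    push_cast
    ring
  -- real substitution
  have hsa : 0 < Real.sqrt a := Real.sqrt_pos.2 ha
  set k : ℝ := 1 / (2 * Real.sqrt a) with hk
  have hkpos : 0 < k := by positivity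
  have hsub : ∫ s in Ioi (0:ℝ), Real.exp (-(b+s) ^ 2 / (4 * a))
      = (2 * Real.sqrt a) * ∫ ξ in Ioi (b / (2 * Real.sqrt a)), Real.exp (-ξ ^ 2) := by
    have harg : ∀ s : ℝ, -(b+s) ^ 2 / (4 * a) = -(k * (s + b)) ^ 2 := by
      intro s
      have h := Real.sq_sqrt ha.le
      rw [hk]
      field_simp
      linear_combination (-4*(b+s)^2) * h
    simp_rw [harg]
    have htr : ∫ s in Ioi (0:ℝ), Real.exp (-(k * (s + b)) ^ 2)
        = ∫ u in Ioi b, Real.exp (-(k * u) ^ 2) := by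
      have hpre : (fun x : ℝ => x + b) ⁻¹' (Ioi b) = Ioi (0:ℝ) := by
        ext x; simp
      have := (measurePreserving_add_right volume b).setIntegral_preimage_emb
        (measurableEmbedding_addRight b) (fun u => Real.exp (-(k * u) ^ 2)) (Ioi b)
      rw [hpre] at this
      exact this
    rw [htr, integral_comp_mul_left_Ioi (fun x => Real.exp (-x ^ 2)) b hkpos]
    rw [show k * b = b / (2 * Real.sqrt a) by rw [hk]; ring, smul_eq_mul]
    rw [show k⁻¹ = 2 * Real.sqrt a by rw [hk]; simp]
  -- assemble
  calc (1 / (Real.pi : ℂ)) * ∫ t : ℝ, Complex.exp ((a:ℂ) * (l t) ^ 2 - (b:ℂ) * (l t)) / l t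
      = (1 / (Real.pi : ℂ)) * ∫ t : ℝ, ∫ s in Ioi (0:ℝ),
          Complex.exp ((a:ℂ) * (l t) ^ 2 - ((b:ℂ) + (s:ℂ)) * (l t)) := by
        congr 1
        exact integral_congr_ae (ae_of_all _ fun t => (hslice t).symm)
    _ = (1 / (Real.pi : ℂ)) * ∫ s in Ioi (0:ℝ), ∫ t : ℝ,
          Complex.exp ((a:ℂ) * (l t) ^ 2 - ((b:ℂ) + (s:ℂ)) * (l t)) := by rw [hswap]
    _ = (1 / (Real.pi : ℂ)) * ∫ s in Ioi (0:ℝ),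
          ((Real.sqrt (Real.pi / a) * Real.exp (-(b+s) ^ 2 / (4 * a)) : ℝ) : ℂ) := by
        congr 1
        exact integral_congr_ae (ae_of_all _ fun s => hinner s)
    _ = (1 / (Real.pi : ℂ)) *
          ((Real.sqrt (Real.pi / a) * ∫ s in Ioi (0:ℝ), Real.exp (-(b+s) ^ 2 / (4 * a)) : ℝ) : ℂ) := by
        congr 1
        rw [← integral_const_mul]
        exact integral_ofReal
    _ = ((erfc (b / (2 * Real.sqrt a)) : ℝ) : ℂ) := by
        set J : ℝ := ∫ ξ in Ioi (b / (2 * Real.sqrt a)), Real.exp (-ξ ^ 2) with hJ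
        rw [hsub]
        rw [show (1 / (Real.pi : ℂ)) = ((1 / Real.pi : ℝ) : ℂ) by push_cast; ring,
          ← Complex.ofReal_mul]
        congr 1
        rw [erfc, ← hJ]
        have h3 : Real.sqrt Real.pi * Real.sqrt Real.pi = Real.pi := Real.mul_self_sqrt hπ.le
        have h4 : Real.sqrt a * Real.sqrt a = a := Real.mul_self_sqrt ha.le
        have h5 : Real.sqrt (Real.pi / a) = Real.sqrt Real.pi / Real.sqrt a := Real.sqrt_div hπ.le a
        have hsπ : 0 < Real.sqrt Real.pi := Real.sqrt_pos.2 hπ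
        rw [h5]
        field_simp
        linear_combination J * h3
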